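/- For every positive integer n, the set of one-dimensional subspaces ℂ·ψ of ℂ² (ψ nonzero) for which χ(ψ^{⊗n}) < χ_n is finite, and likewise the set of one-dimensional subspaces ℂ·ψ of ℂ² for which χℝ(ψ^{⊗n}) < χ_nℝ is finite. Equivalently, all but finitely many projective qubit states maximize χ(ψ^{⊗n}), and all but finitely many maximize χℝ(ψ^{⊗n}). -/

import Mathlib

open scoped BigOperators Classical

noncomputable section

namespace StabPaper

/-- The space `𝔽₂ⁿ` of length-`n` bitstrings. -/
abbrev F2 (n : ℕ) := Fin n → ZMod 2

/-- `A ⊆ 𝔽₂ⁿ` is a (nonempty) affine linear subspace. -/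
def IsAffineSubspace {n : ℕ} (A : Set (F2 n)) : Prop :=
  A.Nonempty ∧ ∀ x ∈ A, ∀ y ∈ A, ∀ z ∈ A, x + y + z ∈ A

/-- `l : 𝔽₂ⁿ → 𝔽₂` is a linear form. -/
def IsLinearForm {n : ℕ} (l : F2 n → ZMod 2) : Prop :=
  ∀ x y, l (x + y) = l x + l y

/-- `q : 𝔽₂ⁿ → 𝔽₂` is a quadratic form (polynomial of degree at most 2
with vanishing constant term). -/
def IsQuadraticForm {n : ℕ} (q : F2 n → ZMod 2) : Prop :=
  q 0 = 0 ∧ ∀ x y z, q (x + y + z) = q (x + y) + q (x + z) + q (y + z) + q x + q y + q z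

/-- A stabilizer state vector on `n` qubits. -/
def IsStabilizerState {n : ℕ} (σ : F2 n → ℂ) : Prop :=
  ∃ (A : Set (F2 n)) (l q : F2 n → ZMod 2),
    IsAffineSubspace A ∧ IsLinearForm l ∧ IsQuadraticForm q ∧
    ∀ x, σ x = if x ∈ A then Complex.I ^ (l x).val * (-1 : ℂ) ^ (q x).val else 0

/-- A real stabilizer state vector on `n` qubits (the case `l = 0`). -/
def IsRealStabilizerState {n : ℕ} (σ : F2 n → ℂ) : Prop :=
  ∃ (A : Set (F2 n)) (q : F2 n → ZMod 2),
    IsAffineSubspace A ∧ IsQuadraticForm q ∧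
    ∀ x, σ x = if x ∈ A then (-1 : ℂ) ^ (q x).val else 0

/-- The stabilizer rank: the least `r` such that `ψ` is a `ℂ`-linear combination of
`r` stabilizer state vectors. -/
def stabRank {n : ℕ} (ψ : F2 n → ℂ) : ℕ :=
  sInf {r : ℕ | ∃ (c : Fin r → ℂ) (σ : Fin r → (F2 n → ℂ)),
    (∀ i, IsStabilizerState (σ i)) ∧ ψ = ∑ i, c i • σ i}

/-- The real stabilizer rank: the least `r` such that `ψ` is a `ℂ`-linear combination of
`r` real stabilizer state vectors. -/
def realStabRank {n : ℕ} (ψ : F2 n → ℂ) : ℕ :=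
  sInf {r : ℕ | ∃ (c : Fin r → ℂ) (σ : Fin r → (F2 n → ℂ)),
    (∀ i, IsRealStabilizerState (σ i)) ∧ ψ = ∑ i, c i • σ i}

/-- The `n`-fold tensor power of a one-qubit vector `ψ : ℂ²`. -/
def tensorPow (ψ : ZMod 2 → ℂ) (n : ℕ) : F2 n → ℂ := fun x => ∏ i, ψ (x i)

/-- The Euclidean norm on `ℂ^{𝔽₂ⁿ}`. -/
def l2norm {n : ℕ} (φ : F2 n → ℂ) : ℝ := Real.sqrt (∑ x, ‖φ x‖ ^ 2)

/-- The δ-approximate stabilizer rank. -/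
def approxStabRank {n : ℕ} (δ : ℝ) (ψ : F2 n → ℂ) : ℕ :=
  sInf {r : ℕ | ∃ φ : F2 n → ℂ, φ ≠ 0 ∧
    l2norm (fun x => ((l2norm φ : ℝ) : ℂ)⁻¹ * φ x - ((l2norm ψ : ℝ) : ℂ)⁻¹ * ψ x) < δ ∧
    stabRank φ = r}

/-- The one-qubit vector `a·e₀ + b·e₁ ∈ ℂ²`. -/
def qubit (a b : ℂ) : ZMod 2 → ℂ := fun x => if x = 0 then a else b

/-- A nonzero `ψ ∈ ℂ²` is a one-qubit stabilizer state vector iff it is proportional to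
one of `e₀, e₁, e₀+e₁, e₀−e₁, e₀+i·e₁, e₀−i·e₁`. -/
def IsQubitStabVec (ψ : ZMod 2 → ℂ) : Prop :=
  ∃ c : ℂ, c ≠ 0 ∧ (ψ = c • qubit 1 0 ∨ ψ = c • qubit 0 1 ∨ ψ = c • qubit 1 1 ∨
    ψ = c • qubit 1 (-1) ∨ ψ = c • qubit 1 Complex.I ∨ ψ = c • qubit 1 (-Complex.I))

/-- The `n`-th generic stabilizer rank `χ_n`. -/
def genStabRank (n : ℕ) : ℕ :=
  sSup {r : ℕ | ∃ ψ : ZMod 2 → ℂ, ψ ≠ 0 ∧ stabRank (tensorPow ψ n) = r}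

/-- The `n`-th generic real stabilizer rank `χ_nℝ`. -/
def genRealStabRank (n : ℕ) : ℕ :=
  sSup {r : ℕ | ∃ ψ : ZMod 2 → ℂ, ψ ≠ 0 ∧ realStabRank (tensorPow ψ n) = r}



-- Auxiliary development
section Aux
variable {n : ℕ}

lemma vand_span (n : ℕ) (a b : Fin (n+1) → ℂ)
    (hnz : ∀ i, ¬(a i = 0 ∧ b i = 0))
    (hnp : ∀ i j, i ≠ j → a i * b j ≠ a j * b i) :
    ∀ v : Fin (n+1) → ℂ,
      v ∈ Submodule.span ℂ (Set.range (fun i (k : Fin (n+1)) => a i ^ (n - (k:ℕ)) * b i ^ (k:ℕ))) := by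
  set M : Matrix (Fin (n+1)) (Fin (n+1)) ℂ :=
    Matrix.of (fun i k => a i ^ (n - (k:ℕ)) * b i ^ (k:ℕ)) with hM
  have hdet : M.det ≠ 0 := by
    intro hdet
    obtain ⟨v, hv0, hmv⟩ := Matrix.exists_mulVec_eq_zero_iff.mpr hdet
    -- polynomial
    set P : Polynomial ℂ := ∑ k : Fin (n+1), Polynomial.C (v k) * Polynomial.X ^ (k:ℕ) with hP
    have hcoeff : ∀ m : Fin (n+1), P.coeff (m:ℕ) = v m := by
      intro m
      rw [hP, Polynomial.finset_sum_coeff]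
      simp only [Polynomial.coeff_C_mul, Polynomial.coeff_X_pow, mul_ite, mul_one, mul_zero]
      rw [Finset.sum_eq_single m]
      · simp
      · intro k _ hk
        simp [Fin.val_eq_val, (by simpa [eq_comm] using hk : m ≠ k)]
      · simp
    have hvP : P = 0 → False := by
      intro h0
      apply hv0
      funext m
      have := hcoeff m
      rw [h0] at this
      simpa using this.symm
    have hdeg : P.natDegree ≤ n := by
      rw [hP]
      refine Polynomial.natDegree_sum_le_of_forall_le _ _ (fun k _ => ?_)
      exact (Polynomial.natDegree_C_mul_X_pow_le _ _).trans (Nat.lt_succ_iff.mp k.isLt)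
    have heq : ∀ i, ∑ k : Fin (n+1), a i ^ (n - (k:ℕ)) * b i ^ (k:ℕ) * v k = 0 := by
      intro i
      have := congrFun hmv i
      simpa [Matrix.mulVec, dotProduct, hM] using this
    have heval : ∀ i, a i ≠ 0 → P.eval (b i / a i) = 0 := by
      intro i hai
      have key : a i ^ n * P.eval (b i / a i) = 0 := by
        rw [hP]
        simp only [Polynomial.eval_finset_sum, Polynomial.eval_mul, Polynomial.eval_C,
          Polynomial.eval_pow, Polynomial.eval_X, Finset.mul_sum]
        rw [← heq i]
        refine Finset.sum_congr rfl (fun k _ => ?_)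
        have hk : (k:ℕ) ≤ n := Nat.lt_succ_iff.mp k.isLt
        rw [div_pow, mul_comm (v k)]
        field_simp
        have hpow : a i ^ n = a i ^ (n - (k:ℕ)) * a i ^ (k:ℕ) := by
          rw [← pow_add, Nat.sub_add_cancel hk]
        rw [hpow]; ring
      rcases mul_eq_zero.mp key with h | h
      · exact absurd (pow_eq_zero_iff'.mp h).1 hai
      · exact h
    have hinj : ∀ i j, a i ≠ 0 → a j ≠ 0 → b i / a i = b j / a j → i = j := by
      intro i j hai haj hij
      by_contra hne
      apply hnp i j hne
      field_simp at hij
      linear_combination -hij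
    by_cases hall : ∀ i, a i ≠ 0
    · have := P.eq_zero_of_natDegree_lt_card_of_eval_eq_zero
        (f := fun i : Fin (n+1) => b i / a i)
        (fun i j h => hinj i j (hall i) (hall j) h)
        (fun i => heval i (hall i))
        (by simpa using Nat.lt_succ_of_le hdeg)
      exact hvP this
    · push_neg at hall
      obtain ⟨i₀, hi₀⟩ := hall
      have hbi₀ : b i₀ ≠ 0 := fun h => hnz i₀ ⟨hi₀, h⟩
      have hane : ∀ i, i ≠ i₀ → a i ≠ 0 := by
        intro i hi h
        exact hnp i i₀ hi (by rw [h, hi₀]; ring)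
      -- v at last index is zero
      have hvlast : v (Fin.last n) = 0 := by
        have := heq i₀
        rw [Finset.sum_eq_single (Fin.last n)] at this
        · simpa [hi₀, hbi₀] using this
        · intro k _ hk
          have hk' : (k:ℕ) < n := by
            have := k.isLt
            rcases Nat.lt_succ_iff_lt_or_eq.mp k.isLt with h | h
            · exact h
            · exact absurd (Fin.ext h) hk
          rw [hi₀]
          rw [zero_pow (by omega)]
          ring
        · simp
      have hPne : P ≠ 0 := fun h => hvP h
      have hcoefn : P.coeff n = 0 := by
        have := hcoeff (Fin.last n)
        simpa [hvlast] using this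
      have hdeg' : P.natDegree < n := by
        rcases lt_or_eq_of_le hdeg with h | h
        · exact h
        · exfalso
          exact hPne (Polynomial.leadingCoeff_eq_zero.mp (by rwa [Polynomial.leadingCoeff, h]))
      have hcard : Fintype.card {i : Fin (n+1) // i ≠ i₀} = n := by
        simp [Fintype.card_subtype_compl]
      have := P.eq_zero_of_natDegree_lt_card_of_eval_eq_zero
        (f := fun i : {i : Fin (n+1) // i ≠ i₀} => b i.1 / a i.1)
        (fun i j h => Subtype.ext (hinj i.1 j.1 (hane i.1 i.2) (hane j.1 j.2) h))
        (fun i => heval i.1 (hane i.1 i.2))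
        (by rw [hcard]; exact hdeg')
      exact hvP this
  -- rows span
  intro v
  have hunit : IsUnit M := (Matrix.isUnit_iff_isUnit_det M).mpr (isUnit_iff_ne_zero.mpr hdet)
  obtain ⟨w, hw⟩ := Matrix.vecMul_surjective_iff_isUnit.mpr hunit v
  have hv : v = ∑ i, w i • M i := by
    rw [← hw]
    funext k
    simp [Matrix.vecMul, dotProduct, Finset.sum_apply]
  rw [hv]
  exact Submodule.sum_mem _ (fun i _ =>
    Submodule.smul_mem _ _ (Submodule.subset_span ⟨i, rfl⟩))


lemma zmod2_cases (v : ZMod 2) : v = 0 ∨ v = 1 := by revert v; decide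

/-- weight of a bitstring -/
def wt {n : ℕ} (x : F2 n) : ℕ := (Finset.univ.filter fun i => x i = 1).card

lemma wt_le {n : ℕ} (x : F2 n) : wt x ≤ n := by
  simpa [wt] using (Finset.card_filter_le Finset.univ (fun i => x i = 1))

/-- linear embedding of ℂ^{n+1} via weight -/
def iota (n : ℕ) : (Fin (n+1) → ℂ) →ₗ[ℂ] (F2 n → ℂ) where
  toFun v := fun x => v ⟨wt x, Nat.lt_succ_of_le (wt_le x)⟩
  map_add' u v := rfl
  map_smul' c v := rfl

lemma tensorPow_eq_iota (n : ℕ) (χ : ZMod 2 → ℂ) :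
    tensorPow χ n = iota n (fun k => χ 0 ^ (n - (k:ℕ)) * χ 1 ^ (k:ℕ)) := by
  funext x
  have h1 : ∀ i, χ (x i) = if x i = 1 then χ 1 else χ 0 := by
    intro i
    rcases zmod2_cases (x i) with h | h <;> simp [h]
  have hcard : (Finset.univ.filter fun i => ¬ x i = 1).card = n - wt x := by
    have := Finset.card_filter_add_card_filter_not (s := Finset.univ)
      (p := fun i : Fin n => x i = 1)
    simp only [Finset.card_univ, Fintype.card_fin] at this
    unfold wt
    omega
  calc tensorPow χ n x = ∏ i, (if x i = 1 then χ 1 else χ 0) := by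
        unfold tensorPow; exact Finset.prod_congr rfl (fun i _ => h1 i)
    _ = χ 1 ^ wt x * χ 0 ^ (n - wt x) := by
        rw [Finset.prod_ite]; simp [wt, hcard]
    _ = iota n (fun k => χ 0 ^ (n - (k:ℕ)) * χ 1 ^ (k:ℕ)) x := by
        simp [iota]; ring

lemma span_singleton_eq_of_cross (u v : ZMod 2 → ℂ) (hu : u ≠ 0) (hv : v ≠ 0)
    (h : u 0 * v 1 = u 1 * v 0) :
    Submodule.span ℂ {u} = Submodule.span ℂ {v} := by
  have key : ∃ c : ℂ, c ≠ 0 ∧ v = c • u := by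
    by_cases h0 : u 0 = 0
    · have h1 : u 1 ≠ 0 := by
        intro h1; apply hu; funext z; rcases zmod2_cases z with hz | hz <;> simp [hz, h0, h1]
      have hv0 : v 0 = 0 := by
        have := h; rw [h0] at this; simp at this
        rcases this with h' | h'
        · exact absurd h' h1
        · exact h'
      have hv1 : v 1 ≠ 0 := by
        intro h1'; apply hv; funext z; rcases zmod2_cases z with hz | hz <;> simp [hz, hv0, h1']
      exact ⟨v 1 / u 1, div_ne_zero hv1 h1, by
        funext z; rcases zmod2_cases z with hz | hz <;> simp [hz, hv0, h0] <;> field_simp⟩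
    · have hv0 : v 0 ≠ 0 := by
        intro hv0'; apply hv; funext z
        have : u 0 * v 1 = 0 := by rw [h, hv0']; ring
        rcases mul_eq_zero.mp this with h' | h'
        · exact absurd h' h0
        · rcases zmod2_cases z with hz | hz <;> simp [hz, hv0', h']
      refine ⟨v 0 / u 0, div_ne_zero hv0 h0, ?_⟩
      funext z; rcases zmod2_cases z with hz | hz
      · simp [hz]; field_simp
      · simp [hz]; field_simp; linear_combination h
  obtain ⟨c, hc, rfl⟩ := key
  exact (Submodule.span_singleton_smul_eq (IsUnit.mk0 c hc) u).symm

lemma tensorPow_mem_span (n : ℕ) (ψ : Fin (n+1) → (ZMod 2 → ℂ))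
    (h0 : ∀ i, ψ i ≠ 0)
    (hd : ∀ i j, i ≠ j → Submodule.span ℂ {ψ i} ≠ Submodule.span ℂ {ψ j})
    (φ : ZMod 2 → ℂ) :
    tensorPow φ n ∈ Submodule.span ℂ (Set.range fun i => tensorPow (ψ i) n) := by
  set a : Fin (n+1) → ℂ := fun i => ψ i 0
  set b : Fin (n+1) → ℂ := fun i => ψ i 1
  have hnz : ∀ i, ¬(a i = 0 ∧ b i = 0) := by
    rintro i ⟨ha, hb⟩
    apply h0 i
    funext z; rcases zmod2_cases z with hz | hz <;> simp [hz, a, b] at ha hb ⊢ <;> assumption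
  have hnp : ∀ i j, i ≠ j → a i * b j ≠ a j * b i := by
    intro i j hij h
    exact hd i j hij (span_singleton_eq_of_cross _ _ (h0 i) (h0 j) (by
      simpa [a, b, mul_comm] using h))
  have hrange : (Set.range fun i => tensorPow (ψ i) n)
      = (iota n) '' (Set.range (fun i (k : Fin (n+1)) => a i ^ (n - (k:ℕ)) * b i ^ (k:ℕ))) := by
    rw [← Set.range_comp]
    refine congrArg _ (funext fun i => ?_)
    exact tensorPow_eq_iota n (ψ i)
  rw [hrange, Submodule.span_image]
  rw [tensorPow_eq_iota n φ]
  exact Submodule.mem_map_of_mem (vand_span n a b hnz hnp _)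

variable {n : ℕ}

/-- delta function at a point -/
def delta (a : F2 n) : F2 n → ℂ := fun x => if x = a then 1 else 0

/-- abstract rank w.r.t. a predicate -/
def rankOf (P : (F2 n → ℂ) → Prop) (ψ : F2 n → ℂ) : ℕ :=
  sInf {r : ℕ | ∃ (c : Fin r → ℂ) (σ : Fin r → (F2 n → ℂ)),
    (∀ i, P (σ i)) ∧ ψ = ∑ i, c i • σ i}

lemma sum_delta (φ : F2 n → ℂ) : φ = ∑ a : F2 n, φ a • delta a := by
  funext x
  rw [Finset.sum_apply]
  simp only [Pi.smul_apply, delta, smul_eq_mul, mul_ite, mul_one, mul_zero]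
  rw [Finset.sum_eq_single x] <;> simp +contextual [eq_comm]

lemma card_mem_rankSet (P : (F2 n → ℂ) → Prop) (hδ : ∀ a : F2 n, P (delta a))
    (φ : F2 n → ℂ) :
    Fintype.card (F2 n) ∈ {r : ℕ | ∃ (c : Fin r → ℂ) (σ : Fin r → (F2 n → ℂ)),
      (∀ i, P (σ i)) ∧ φ = ∑ i, c i • σ i} := by
  set e : Fin (Fintype.card (F2 n)) ≃ F2 n := (Fintype.equivFin (F2 n)).symm
  refine ⟨fun i => φ (e i), fun i => delta (e i), fun i => hδ _, ?_⟩
  rw [Equiv.sum_comp e (fun a => φ a • delta a)]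
  exact sum_delta φ

lemma rankOf_le_card (P : (F2 n → ℂ) → Prop) (hδ : ∀ a : F2 n, P (delta a))
    (φ : F2 n → ℂ) : rankOf P φ ≤ Fintype.card (F2 n) :=
  Nat.sInf_le (card_mem_rankSet P hδ φ)

lemma rankOf_spec (P : (F2 n → ℂ) → Prop) (hδ : ∀ a : F2 n, P (delta a))
    (φ : F2 n → ℂ) :
    ∃ (c : Fin (rankOf P φ) → ℂ) (σ : Fin (rankOf P φ) → (F2 n → ℂ)),
      (∀ i, P (σ i)) ∧ φ = ∑ i, c i • σ i :=
  Nat.sInf_mem (Set.nonempty_of_mem (card_mem_rankSet P hδ φ))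

lemma rankOf_le_of_mem_span (P : (F2 n → ℂ) → Prop) (T : Finset (F2 n → ℂ))
    (hT : ∀ τ ∈ T, P τ) (φ : F2 n → ℂ) (h : φ ∈ Submodule.span ℂ (T : Set (F2 n → ℂ))) :
    rankOf P φ ≤ T.card := by
  obtain ⟨c, hsupp, hsum⟩ := Submodule.mem_span_set.mp h
  apply Nat.sInf_le
  set e : Fin T.card ≃ {x // x ∈ T} := (Finset.equivFinOfCardEq rfl).symm
  refine ⟨fun i => c (e i).1, fun i => (e i).1, fun i => hT _ (e i).2, ?_⟩
  rw [Equiv.sum_comp e (fun t : {x // x ∈ T} => c t.1 • t.1)]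
  rw [Finset.sum_coe_sort T (fun t => c t • t)]
  rw [← hsum]
  rw [Finsupp.sum_of_support_subset c (by exact_mod_cast hsupp) _ (fun i _ => zero_smul ℂ i)]

/-- The main abstract finiteness theorem. -/
theorem main_finite (n : ℕ) (P : (F2 n → ℂ) → Prop)
    (hfin : {σ : F2 n → ℂ | P σ}.Finite) (hδ : ∀ a : F2 n, P (delta a))
    (g : ℕ) (hg : ∃ ψ : ZMod 2 → ℂ, ψ ≠ 0 ∧ g ≤ rankOf P (tensorPow ψ n)) :
    {L : Submodule ℂ (ZMod 2 → ℂ) | ∃ ψ : ZMod 2 → ℂ, ψ ≠ 0 ∧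
      L = Submodule.span ℂ {ψ} ∧ rankOf P (tensorPow ψ n) < g}.Finite := by
  classical
  obtain ⟨ψs, hψs0, hψsg⟩ := hg
  set Sf : Finset (F2 n → ℂ) := hfin.toFinset with hSf
  have hsub : {L : Submodule ℂ (ZMod 2 → ℂ) | ∃ ψ : ZMod 2 → ℂ, ψ ≠ 0 ∧
      L = Submodule.span ℂ {ψ} ∧ rankOf P (tensorPow ψ n) < g}
      ⊆ ⋃ T ∈ Sf.powerset,
        {L : Submodule ℂ (ZMod 2 → ℂ) | ∃ ψ : ZMod 2 → ℂ, ψ ≠ 0 ∧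
          L = Submodule.span ℂ {ψ} ∧ T.card < g ∧
          tensorPow ψ n ∈ Submodule.span ℂ (T : Set (F2 n → ℂ))} := by
    rintro L ⟨ψ, hψ0, hL, hlt⟩
    obtain ⟨c, σ, hσ, hsum⟩ := rankOf_spec P hδ (tensorPow ψ n)
    set T : Finset (F2 n → ℂ) := Finset.image σ Finset.univ with hT
    have hTcard : T.card < g := lt_of_le_of_lt
      ((Finset.card_image_le).trans (by simp)) hlt
    have hTpow : T ∈ Sf.powerset := by
      rw [Finset.mem_powerset]
      intro τ hτ
      obtain ⟨i, _, rfl⟩ := Finset.mem_image.mp hτ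
      exact hfin.mem_toFinset.mpr (hσ i)
    refine Set.mem_biUnion hTpow ⟨ψ, hψ0, hL, hTcard, ?_⟩
    rw [hsum]
    exact Submodule.sum_mem _ (fun i _ => Submodule.smul_mem _ _
      (Submodule.subset_span (by simp [hT])))
  refine Set.Finite.subset (Set.Finite.biUnion (Sf.powerset).finite_toSet
    (fun T hTmem => ?_)) hsub
  have hTP : ∀ τ ∈ T, P τ := fun τ hτ =>
    hfin.mem_toFinset.mp (Finset.mem_powerset.mp hTmem hτ)
  by_contra hinf
  obtain ⟨s, hs_sub, hs_card⟩ := Set.Infinite.exists_subset_card_eq hinf (n+1)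
  set e : Fin (n+1) ≃ {x // x ∈ s} := (Finset.equivFinOfCardEq hs_card).symm with he
  have hchoice : ∀ L ∈ s, ∃ ψ : ZMod 2 → ℂ, ψ ≠ 0 ∧
      L = Submodule.span ℂ {ψ} ∧ T.card < g ∧
      tensorPow ψ n ∈ Submodule.span ℂ (T : Set (F2 n → ℂ)) := fun L hL => hs_sub hL
  choose Ψ hΨ0 hΨL hTg hΨmem using hchoice
  set ψf : Fin (n+1) → (ZMod 2 → ℂ) := fun i => Ψ (e i).1 (e i).2 with hψf
  have key := tensorPow_mem_span n ψf (fun i => hΨ0 _ _)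
    (fun i j hij heq => by
      have h1 : ((e i : {x // x ∈ s}) : Submodule ℂ (ZMod 2 → ℂ))
          = ((e j : {x // x ∈ s}) : Submodule ℂ (ZMod 2 → ℂ)) := by
        rw [hΨL (e i).1 (e i).2, hΨL (e j).1 (e j).2]
        exact heq
      exact hij (e.injective (Subtype.ext h1))) ψs
  have hmem : tensorPow ψs n ∈ Submodule.span ℂ (T : Set (F2 n → ℂ)) := by
    refine Submodule.span_le.mpr ?_ key
    rintro _ ⟨i, rfl⟩
    exact hΨmem _ _
  have hle : rankOf P (tensorPow ψs n) ≤ T.card :=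
    rankOf_le_of_mem_span P T hTP (tensorPow ψs n) hmem
  have hlt : T.card < g := hTg (e 0).1 (e 0).2
  omega


lemma stabSet_finite (n : ℕ) : {σ : F2 n → ℂ | IsStabilizerState σ}.Finite := by
  have hV : ({0, 1, -1, Complex.I, -Complex.I} : Set ℂ).Finite :=
    ((((Set.finite_singleton (-Complex.I)).insert Complex.I).insert (-1)).insert 1).insert 0
  refine Set.Finite.subset (Set.Finite.pi (fun _ : F2 n => hV)) ?_
  rintro σ ⟨A, l, q, _, _, _, hσ⟩ x _
  rw [hσ x]
  by_cases hx : x ∈ A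
  · simp only [if_pos hx]
    have hl : (l x).val = 0 ∨ (l x).val = 1 := by
      have := ZMod.val_lt (l x); omega
    have hq : (q x).val = 0 ∨ (q x).val = 1 := by
      have := ZMod.val_lt (q x); omega
    rcases hl with h | h <;> rcases hq with h' | h' <;> simp [h, h']
  · simp [if_neg hx]

lemma realStabSet_finite (n : ℕ) : {σ : F2 n → ℂ | IsRealStabilizerState σ}.Finite := by
  have hV : ({0, 1, -1} : Set ℂ).Finite :=
    ((Set.finite_singleton (-1)).insert 1).insert 0
  refine Set.Finite.subset (Set.Finite.pi (fun _ : F2 n => hV)) ?_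
  rintro σ ⟨A, q, _, _, hσ⟩ x _
  rw [hσ x]
  by_cases hx : x ∈ A
  · simp only [if_pos hx]
    have hq : (q x).val = 0 ∨ (q x).val = 1 := by
      have := ZMod.val_lt (q x); omega
    rcases hq with h | h <;> simp [h]
  · simp [if_neg hx]

lemma affine_singleton (a : F2 n) : IsAffineSubspace ({a} : Set (F2 n)) := by
  refine ⟨⟨a, rfl⟩, ?_⟩
  rintro x hx y hy z hz
  rw [Set.mem_singleton_iff] at hx hy hz
  rw [hx, hy, hz, Set.mem_singleton_iff]
  funext i
  rcases zmod2_cases (a i) with h | h <;> simp only [Pi.add_apply, h] <;> decide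

lemma quad_zero : IsQuadraticForm (fun _ : F2 n => (0 : ZMod 2)) := ⟨rfl, fun _ _ _ => by simp⟩

lemma isStab_delta (a : F2 n) : IsStabilizerState (delta a) := by
  refine ⟨{a}, fun _ => 0, fun _ => 0, affine_singleton a, fun _ _ => by simp, quad_zero, ?_⟩
  intro x
  simp [delta, Set.mem_singleton_iff, ZMod.val_zero]

lemma isRealStab_delta (a : F2 n) : IsRealStabilizerState (delta a) := by
  refine ⟨{a}, fun _ => 0, affine_singleton a, quad_zero, ?_⟩
  intro x
  simp [delta, Set.mem_singleton_iff, ZMod.val_zero]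

lemma qubit10_ne : (qubit 1 0 : ZMod 2 → ℂ) ≠ 0 := by
  intro h
  have := congrFun h 0
  simp [qubit] at this

lemma stabRank_eq_rankOf : (stabRank : (F2 n → ℂ) → ℕ) = rankOf IsStabilizerState := rfl
lemma realStabRank_eq_rankOf : (realStabRank : (F2 n → ℂ) → ℕ) = rankOf IsRealStabilizerState := rfl

lemma genStabRank_mem (n : ℕ) :
    ∃ ψ : ZMod 2 → ℂ, ψ ≠ 0 ∧ stabRank (tensorPow ψ n) = genStabRank n := by
  have hmem := Nat.sSup_mem (s := {r : ℕ | ∃ ψ : ZMod 2 → ℂ, ψ ≠ 0 ∧ stabRank (tensorPow ψ n) = r})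
    ⟨stabRank (tensorPow (qubit 1 0) n), qubit 1 0, qubit10_ne, rfl⟩
    ⟨Fintype.card (F2 n), by
      rintro r ⟨ψ, hψ, rfl⟩
      exact rankOf_le_card IsStabilizerState isStab_delta _⟩
  obtain ⟨ψ, hψ, hr⟩ := hmem
  exact ⟨ψ, hψ, hr⟩

lemma genRealStabRank_mem (n : ℕ) :
    ∃ ψ : ZMod 2 → ℂ, ψ ≠ 0 ∧ realStabRank (tensorPow ψ n) = genRealStabRank n := by
  have hmem := Nat.sSup_mem (s := {r : ℕ | ∃ ψ : ZMod 2 → ℂ, ψ ≠ 0 ∧ realStabRank (tensorPow ψ n) = r})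
    ⟨realStabRank (tensorPow (qubit 1 0) n), qubit 1 0, qubit10_ne, rfl⟩
    ⟨Fintype.card (F2 n), by
      rintro r ⟨ψ, hψ, rfl⟩
      exact rankOf_le_card IsRealStabilizerState isRealStab_delta _⟩
  obtain ⟨ψ, hψ, hr⟩ := hmem
  exact ⟨ψ, hψ, hr⟩

end Aux

/-- For every `n ≥ 1`, the set of one-dimensional subspaces `ℂ·ψ` of `ℂ²` with
`χ(ψ^{⊗n}) < χ_n` is finite, and the set of one-dimensional subspaces `ℂ·ψ` with
`χℝ(ψ^{⊗n}) < χ_nℝ` is finite. -/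
theorem subgeneric_states_finite (n : ℕ) (hn : 1 ≤ n) :
    {L : Submodule ℂ (ZMod 2 → ℂ) | ∃ ψ : ZMod 2 → ℂ, ψ ≠ 0 ∧
      L = Submodule.span ℂ {ψ} ∧ stabRank (tensorPow ψ n) < genStabRank n}.Finite ∧
    {L : Submodule ℂ (ZMod 2 → ℂ) | ∃ ψ : ZMod 2 → ℂ, ψ ≠ 0 ∧
      L = Submodule.span ℂ {ψ} ∧ realStabRank (tensorPow ψ n) < genRealStabRank n}.Finite := by
  constructor
  · obtain ⟨ψ, hψ, hr⟩ := genStabRank_mem n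
    exact main_finite n IsStabilizerState (stabSet_finite n) isStab_delta
      (genStabRank n) ⟨ψ, hψ, le_of_eq hr.symm⟩
  · obtain ⟨ψ, hψ, hr⟩ := genRealStabRank_mem n
    exact main_finite n IsRealStabilizerState (realStabSet_finite n) isRealStab_delta
      (genRealStabRank n) ⟨ψ, hψ, le_of_eq hr.symm⟩


end StabPaper
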